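/- arXiv:2104.01349 — 4 statements merged into one kernel-verified Lean document; each statement's English description precedes it below -/
import Mathlib

section
/- Fix a nonpositive integer ĉ, a real number a with 0 < a < 1, and finite sets of positive integers F_1, F_2 with {0,1,...,-ĉ} ⊆ F_1 ∪ (-ĉ - F_2). Define H = [(F_1 ∪ (-ĉ - F_2)) \ {0,1,...,-ĉ}] ∪ [F_1 ∩ (-ĉ - F_2)]. Then for every nonnegative integer y with y ∉ F_1 and for any sequence c_s ∉ {0,-1,-2,...} with c_s → ĉ, the masses ∏_{f ∈ F_1}(y - f) · ∏_{f ∈ F_2}(y + c_s + f) · a^y Γ(y + c_s)/y! converge to ∏_{h ∈ H}(y - h) · a^y as s → ∞. -/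
open Filter Topology

lemma gamma_shift (z : ℝ) (m : ℕ) (h : ∀ k : ℕ, k < m → z + k ≠ 0) :
    Real.Gamma (z + m) = Real.Gamma z * ∏ k ∈ Finset.range m, (z + k) := by
  induction m with
  | zero => simp
  | succ m ih =>
    have h1 : z + m ≠ 0 := h m (Nat.lt_succ_self m)
    have e : z + ((m : ℝ) + 1) = (z + m) + 1 := by ring
    rw [Nat.cast_succ, e, Real.Gamma_add_one h1, ih (fun k hk => h k (Nat.lt_succ_of_lt hk)),
      Finset.prod_range_succ]
    ring

lemma prod_cast_add_one (n : ℕ) : ∏ k ∈ Finset.range n, ((k : ℝ) + 1) = n.factorial := by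
  induction n with
  | zero => simp
  | succ n ih => rw [Finset.prod_range_succ, ih, Nat.factorial_succ]; push_cast; ring

lemma prod_sub_range (n : ℕ) : ∏ k ∈ Finset.range n, ((n : ℝ) - k) = n.factorial := by
  rw [← prod_cast_add_one n, ← Finset.prod_range_reflect (fun k => (k : ℝ) + 1) n]
  refine Finset.prod_congr rfl fun j hj => ?_
  rw [Finset.mem_range] at hj
  push_cast [Nat.cast_sub (by omega : j ≤ n - 1), Nat.cast_sub (by omega : 1 ≤ n)]
  ring

lemma prod_neg_range (m : ℕ) : ∏ k ∈ Finset.range m, ((k : ℝ) - m) = (-1) ^ m * m.factorial := by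
  calc ∏ k ∈ Finset.range m, ((k : ℝ) - m) = ∏ k ∈ Finset.range m, ((-1) * (((m:ℝ) - k))) := by
        refine Finset.prod_congr rfl fun k _ => by ring
    _ = (-1)^m * ∏ k ∈ Finset.range m, ((m:ℝ) - k) := by
        rw [Finset.prod_mul_distrib, Finset.prod_const, Finset.card_range]
    _ = (-1)^m * m.factorial := by rw [prod_sub_range]

/-- Fix a nonpositive integer `ĉ`, a real `a` with `0 < a < 1`, and finite sets of
positive integers `F₁, F₂` with `{0,…,-ĉ} ⊆ F₁ ∪ (-ĉ - F₂)`, and let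
`H = [(F₁ ∪ (-ĉ - F₂)) \ {0,…,-ĉ}] ∪ [F₁ ∩ (-ĉ - F₂)]`. Then for every
nonnegative integer `y ∉ F₁` and every sequence `c_s → ĉ` avoiding nonpositive
integers, the masses
`∏_{f∈F₁}(y-f) ∏_{f∈F₂}(y+c_s+f) a^y Γ(y+c_s)/y!` converge to `∏_{h∈H}(y-h) a^y`. -/
theorem mass_convergence (c0 : ℤ) (hc0 : c0 ≤ 0) (a : ℝ) (ha : 0 < a) (ha1 : a < 1)
    (F1 F2 : Finset ℤ) (h1 : ∀ f ∈ F1, 0 < f) (h2 : ∀ f ∈ F2, 0 < f)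
    (hsub : Finset.Icc 0 (-c0) ⊆ F1 ∪ F2.image (fun f => -c0 - f))
    (H : Finset ℤ)
    (hH : H = ((F1 ∪ F2.image (fun f => -c0 - f)) \ Finset.Icc 0 (-c0)) ∪
      (F1 ∩ F2.image (fun f => -c0 - f)))
    (y : ℕ) (hy : (y : ℤ) ∉ F1)
    (c : ℕ → ℝ) (hcnp : ∀ s, ∀ n : ℕ, c s ≠ -(n : ℝ))
    (hc : Filter.Tendsto c Filter.atTop (nhds (c0 : ℝ))) :
    Filter.Tendsto
      (fun s => (∏ f ∈ F1, ((y : ℝ) - (f : ℝ))) * (∏ f ∈ F2, ((y : ℝ) + c s + (f : ℝ))) *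
        a ^ y * Real.Gamma ((y : ℝ) + c s) / (y.factorial : ℝ))
      Filter.atTop
      (nhds ((∏ h ∈ H, ((y : ℝ) - (h : ℝ))) * a ^ y)) := by
  set img := F2.image (fun f => -c0 - f) with himg
  set N : ℕ := (-c0).toNat with hNdef
  have hNc : (N : ℤ) = -c0 := Int.toNat_of_nonneg (by omega)
  have hφinj : Function.Injective (fun f : ℤ => -c0 - f) := fun a b h => by
    dsimp at h; omega
  -- F1 ∩ img ⊆ Icc
  have hInterIcc : F1 ∩ img ⊆ Finset.Icc 0 (-c0) := by
    intro x hx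
    rw [Finset.mem_inter] at hx
    obtain ⟨hx1, hx2⟩ := hx
    rw [himg, Finset.mem_image] at hx2
    obtain ⟨f, hf, rfl⟩ := hx2
    have := h1 _ hx1
    have := h2 _ hf
    rw [Finset.mem_Icc]; omega
  have hdisj : Disjoint ((F1 ∪ img) \ Finset.Icc 0 (-c0)) (F1 ∩ img) :=
    Finset.sdiff_disjoint.mono_right hInterIcc
  have prodH : (∏ h ∈ H, ((y : ℝ) - (h : ℝ))) =
      (∏ h ∈ (F1 ∪ img) \ Finset.Icc 0 (-c0), ((y : ℝ) - (h : ℝ))) *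
      (∏ h ∈ F1 ∩ img, ((y : ℝ) - (h : ℝ))) := by
    rw [hH, Finset.prod_union hdisj]
  have hfact_ne : (y.factorial : ℝ) ≠ 0 := by exact_mod_cast y.factorial_ne_zero
  have hpui : (∏ f ∈ F1, ((y : ℝ) - (f : ℝ))) * (∏ g ∈ img, ((y : ℝ) - (g : ℝ))) =
      (∏ h ∈ F1 ∪ img, ((y : ℝ) - (h : ℝ))) * (∏ h ∈ F1 ∩ img, ((y : ℝ) - (h : ℝ))) :=
    (Finset.prod_union_inter).symm
  have hIccRange : Finset.Icc (0:ℤ) (-c0) = (Finset.range (N+1)).image (Nat.cast : ℕ → ℤ) := by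
    ext x
    simp only [Finset.mem_Icc, Finset.mem_image, Finset.mem_range]
    constructor
    · rintro ⟨hx0, hxN⟩
      exact ⟨x.toNat, by omega, by omega⟩
    · rintro ⟨k, hk, rfl⟩; omega
  rcases lt_or_ge (-c0) (y : ℤ) with hcase | hcase
  · -- Case A: y > -c0, Gamma continuous
    set z : ℝ := (y : ℝ) - N with hz
    have hzpos : 0 < z := by
      rw [hz]; have : (N:ℝ) < y := by exact_mod_cast (by omega : (N:ℤ) < y)
      linarith
    have hGcont : ContinuousAt (fun t : ℝ => Real.Gamma ((y:ℝ) + t)) (c0 : ℝ) := by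
      have hd : DifferentiableAt ℝ Real.Gamma ((y:ℝ) + c0) := by
        apply Real.differentiableAt_Gamma
        intro n
        have h0 : (0:ℝ) < (y:ℝ) + c0 := by
          have : (0:ℤ) < (y:ℤ) + c0 := by omega
          exact_mod_cast this
        have : -(n:ℝ) ≤ 0 := neg_nonpos.mpr n.cast_nonneg
        linarith
      exact hd.continuousAt.comp (by fun_prop)
    have hFcont : ContinuousAt (fun t : ℝ =>
        (∏ f ∈ F1, ((y : ℝ) - (f : ℝ))) * (∏ f ∈ F2, ((y : ℝ) + t + (f : ℝ))) *
        a ^ y * Real.Gamma ((y : ℝ) + t) / (y.factorial : ℝ)) (c0 : ℝ) := by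
      apply ContinuousAt.div_const
      exact ((((continuousAt_const.mul ((continuous_finset_prod F2 (fun f _ => by fun_prop)).continuousAt))).mul
        continuousAt_const).mul hGcont)
    have hT := hFcont.tendsto.comp hc
    convert hT using 2
    case e'_3 => rfl
    -- value equality
    have himgprod : (∏ f ∈ F2, ((y : ℝ) + c0 + (f : ℝ))) = ∏ g ∈ img, ((y : ℝ) - (g : ℝ)) := by
      rw [himg, Finset.prod_image (fun x _ x' _ h => hφinj h)]
      refine Finset.prod_congr rfl fun f _ => ?_
      push_cast; ring
    have hIccprod : (∏ h ∈ Finset.Icc (0:ℤ) (-c0), ((y : ℝ) - (h : ℝ))) *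
        Real.Gamma ((y:ℝ) + c0) = (y.factorial : ℝ) := by
      have hre : (∏ h ∈ Finset.Icc (0:ℤ) (-c0), ((y : ℝ) - (h : ℝ))) =
          ∏ k ∈ Finset.range (N+1), (z + k) := by
        rw [hIccRange, Finset.prod_image (fun x _ x' _ h => by exact_mod_cast h),
          ← Finset.prod_range_reflect (fun k => z + k) (N+1)]
        refine Finset.prod_congr rfl fun j hj => ?_
        rw [Finset.mem_range] at hj
        rw [hz]
        push_cast [Nat.cast_sub (by omega : j ≤ N)]
        ring
      have hgam : Real.Gamma ((y:ℝ) + c0) = Real.Gamma z := by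
        congr 1
        rw [hz]
        have : (c0:ℝ) = -(N:ℝ) := by exact_mod_cast (by omega : c0 = -(N:ℤ))
        rw [this]; ring
      have hgs := gamma_shift z (N+1) (fun k _ => by positivity)
      have hz1 : z + ((N:ℝ)+1) = (y:ℝ) + 1 := by rw [hz]; ring
      rw [hre, hgam, mul_comm, ← hgs]
      rw [show ((N+1:ℕ):ℝ) = (N:ℝ)+1 by push_cast; ring, hz1, Real.Gamma_nat_eq_factorial]
    -- assemble
    have hGne : Real.Gamma ((y:ℝ) + c0) ≠ 0 := by
      have : Real.Gamma ((y:ℝ) + c0) = Real.Gamma z := by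
        congr 1; rw [hz]
        have : (c0:ℝ) = -(N:ℝ) := by exact_mod_cast (by omega : c0 = -(N:ℤ))
        rw [this]; ring
      rw [this]; exact (Real.Gamma_pos_of_pos hzpos).ne'
    rw [prodH, himgprod]
    have hsd := Finset.prod_sdiff (f := fun h : ℤ => ((y:ℝ) - h)) hsub
    field_simp
    rw [hpui, ← hsd]
    rw [← hIccprod]
    ring
  · -- Case B
    have hyIcc : (y:ℤ) ∈ Finset.Icc 0 (-c0) := by rw [Finset.mem_Icc]; omega
    have hyimg : (y:ℤ) ∈ img := by
      rcases Finset.mem_union.mp (hsub hyIcc) with h | h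
      · exact absurd h hy
      · exact h
    obtain ⟨f0, hf0F2, hf0eq⟩ := Finset.mem_image.mp hyimg
    have hf0pos := h2 _ hf0F2
    set m : ℕ := N - y with hmdef
    have hym : y < N := by omega
    have hmz : (m:ℤ) = f0 := by omega
    have hmr : (m:ℝ) = -(c0:ℝ) - (y:ℝ) := by
      have : (m:ℤ) = -c0 - y := by omega
      exact_mod_cast this
    have hf0r : (f0:ℝ) = (m:ℝ) := by exact_mod_cast congrArg (Int.cast : ℤ → ℝ) hmz.symm
    set G : ℝ → ℝ := fun t =>
      (∏ f ∈ F1, ((y : ℝ) - (f : ℝ))) * (∏ f ∈ F2.erase f0, ((y : ℝ) + t + (f : ℝ))) *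
      a ^ y * (Real.Gamma ((y:ℝ) + t + m + 1) / ∏ k ∈ Finset.range m, ((y:ℝ) + t + k)) /
      (y.factorial : ℝ) with hGdef
    have heq : ∀ s, (∏ f ∈ F1, ((y : ℝ) - (f : ℝ))) * (∏ f ∈ F2, ((y : ℝ) + c s + (f : ℝ))) *
        a ^ y * Real.Gamma ((y : ℝ) + c s) / (y.factorial : ℝ) = G (c s) := by
      intro s
      have hne : ∀ k : ℕ, (y:ℝ) + c s + k ≠ 0 := by
        intro k h
        exact hcnp s (y + k) (by push_cast; linarith)
      have key : Real.Gamma ((y:ℝ) + c s + m + 1) =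
          Real.Gamma ((y:ℝ) + c s) * (∏ k ∈ Finset.range m, ((y:ℝ) + c s + k)) *
          ((y:ℝ) + c s + m) := by
        have hgs := gamma_shift ((y:ℝ) + c s) (m+1) (fun k _ => hne k)
        rw [Finset.prod_range_succ] at hgs
        rw [show (y:ℝ) + c s + m + 1 = (y:ℝ) + c s + ((m+1 : ℕ) : ℝ) by push_cast; ring, hgs]
        ring
      have hprodne : (∏ k ∈ Finset.range m, ((y:ℝ) + c s + k)) ≠ 0 :=
        Finset.prod_ne_zero_iff.mpr (fun k _ => hne k)
      rw [hGdef]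
      dsimp only
      rw [← Finset.mul_prod_erase F2 _ hf0F2, key, hf0r]
      field_simp
    have hDval : (∏ k ∈ Finset.range m, ((y:ℝ) + c0 + k)) = (-1)^m * m.factorial := by
      rw [← prod_neg_range m]
      refine Finset.prod_congr rfl fun k _ => by rw [hmr]; ring
    have hm1ne : ((-1:ℝ))^m ≠ 0 := pow_ne_zero _ (by norm_num)
    have hmfne : ((m.factorial : ℝ)) ≠ 0 := by exact_mod_cast m.factorial_ne_zero
    have hDne : (∏ k ∈ Finset.range m, ((y:ℝ) + c0 + k)) ≠ 0 := by
      rw [hDval]; exact mul_ne_zero hm1ne hmfne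
    have hGamone : Real.Gamma ((y:ℝ) + c0 + m + 1) = 1 := by
      rw [show (y:ℝ) + c0 + m + 1 = 1 by rw [hmr]; ring]
      exact Real.Gamma_one
    have hGcont : ContinuousAt G (c0 : ℝ) := by
      rw [hGdef]
      apply ContinuousAt.div_const
      refine ContinuousAt.mul (ContinuousAt.mul (ContinuousAt.mul continuousAt_const
        ((continuous_finset_prod _ (fun f _ => by fun_prop)).continuousAt)) continuousAt_const)
        (ContinuousAt.div ?_ ((continuous_finset_prod _ (fun k _ => by fun_prop)).continuousAt)
          hDne)
      have hd : DifferentiableAt ℝ Real.Gamma ((y:ℝ) + c0 + m + 1) := by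
        apply Real.differentiableAt_Gamma
        intro n
        rw [show (y:ℝ) + c0 + m + 1 = 1 by rw [hmr]; ring]
        have : -(n:ℝ) ≤ 0 := neg_nonpos.mpr n.cast_nonneg
        intro h; linarith
      exact ContinuousAt.comp (x := (c0:ℝ)) (g := Real.Gamma)
        (f := fun t : ℝ => (y:ℝ) + t + m + 1) hd.continuousAt (by fun_prop)
    -- value of G at c0
    have heraseprod : (∏ f ∈ F2.erase f0, ((y:ℝ) + c0 + (f : ℝ))) =
        ∏ g ∈ img.erase (y:ℤ), ((y:ℝ) - (g:ℝ)) := by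
      have himg2 : img.erase (y:ℤ) = (F2.erase f0).image (fun f => -c0 - f) := by
        rw [himg, Finset.image_erase hφinj, hf0eq]
      rw [himg2, Finset.prod_image (fun x _ x' _ h => hφinj h)]
      exact Finset.prod_congr rfl fun f _ => by push_cast; ring
    have hsplit1 : F1 ∪ img.erase (y:ℤ) = (F1 ∪ img).erase (y:ℤ) := by
      ext x
      simp only [Finset.mem_union, Finset.mem_erase]
      constructor
      · rintro (h | ⟨hne, h⟩)
        · exact ⟨fun he => hy (he ▸ h), Or.inl h⟩
        · exact ⟨hne, Or.inr h⟩
      · rintro ⟨hne, h | h⟩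
        · exact Or.inl h
        · exact Or.inr ⟨hne, h⟩
    have hsplit2 : F1 ∩ img.erase (y:ℤ) = F1 ∩ img := by
      ext x
      simp only [Finset.mem_inter, Finset.mem_erase]
      constructor
      · rintro ⟨ha', _, hb'⟩; exact ⟨ha', hb'⟩
      · rintro ⟨ha', hb'⟩; exact ⟨ha', fun he => hy (he ▸ ha'), hb'⟩
    have hsplit3 : (F1 ∪ img).erase (y:ℤ) =
        ((F1 ∪ img) \ Finset.Icc 0 (-c0)) ∪ (Finset.Icc (0:ℤ) (-c0)).erase (y:ℤ) := by
      ext x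
      simp only [Finset.mem_erase, Finset.mem_union, Finset.mem_sdiff]
      constructor
      · rintro ⟨hne, hx⟩
        by_cases hxI : x ∈ Finset.Icc (0:ℤ) (-c0)
        · exact Or.inr ⟨hne, hxI⟩
        · exact Or.inl ⟨hx, hxI⟩
      · rintro (⟨hx, hxI⟩ | ⟨hne, hxI⟩)
        · exact ⟨fun he => hxI (he ▸ hyIcc), hx⟩
        · exact ⟨hne, Finset.mem_union.mp (hsub hxI)⟩
    have hdisj2 : Disjoint ((F1 ∪ img) \ Finset.Icc 0 (-c0))
        ((Finset.Icc (0:ℤ) (-c0)).erase (y:ℤ)) :=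
      Finset.sdiff_disjoint.mono_right (Finset.erase_subset _ _)
    have hsplit4 : (Finset.Icc (0:ℤ) (-c0)).erase (y:ℤ) =
        Finset.Ico (0:ℤ) (y:ℤ) ∪ Finset.Ioc (y:ℤ) (-c0) := by
      ext x
      simp only [Finset.mem_erase, Finset.mem_Icc, Finset.mem_union, Finset.mem_Ico,
        Finset.mem_Ioc]
      omega
    have hdisj3 : Disjoint (Finset.Ico (0:ℤ) (y:ℤ)) (Finset.Ioc (y:ℤ) (-c0)) := by
      rw [Finset.disjoint_left]
      intro x hx hx'
      rw [Finset.mem_Ico] at hx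
      rw [Finset.mem_Ioc] at hx'
      omega
    have hIcoprod : (∏ h ∈ Finset.Ico (0:ℤ) (y:ℤ), ((y:ℝ) - (h:ℝ))) = (y.factorial : ℝ) := by
      have hIco : Finset.Ico (0:ℤ) (y:ℤ) = (Finset.range y).image (Nat.cast : ℕ → ℤ) := by
        ext x
        simp only [Finset.mem_Ico, Finset.mem_image, Finset.mem_range]
        constructor
        · rintro ⟨h0, h1⟩; exact ⟨x.toNat, by omega, by omega⟩
        · rintro ⟨k, hk, rfl⟩; omega
      rw [hIco, Finset.prod_image (fun x _ x' _ h => by exact_mod_cast h)]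
      simpa using prod_sub_range y
    have hIocprod : (∏ h ∈ Finset.Ioc (y:ℤ) (-c0), ((y:ℝ) - (h:ℝ))) =
        (-1)^m * (m.factorial : ℝ) := by
      have hIoc : Finset.Ioc (y:ℤ) (-c0) =
          (Finset.range m).image (fun j : ℕ => (y:ℤ) + 1 + j) := by
        ext x
        simp only [Finset.mem_Ioc, Finset.mem_image, Finset.mem_range]
        constructor
        · rintro ⟨h0, h1⟩; exact ⟨(x - y - 1).toNat, by omega, by omega⟩
        · rintro ⟨k, hk, rfl⟩; omega
      rw [hIoc, Finset.prod_image (fun x _ x' _ h => by omega)]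
      have : ∀ j ∈ Finset.range m, ((y:ℝ) - (((y:ℤ) + 1 + j : ℤ) : ℝ)) = (-1) * ((j:ℝ) + 1) := by
        intro j _; push_cast; ring
      rw [Finset.prod_congr rfl this, Finset.prod_mul_distrib, Finset.prod_const,
        Finset.card_range, prod_cast_add_one]
    have hval : G (c0 : ℝ) = (∏ h ∈ H, ((y : ℝ) - (h : ℝ))) * a ^ y := by
      rw [hGdef]
      dsimp only
      rw [hGamone, hDval, heraseprod, prodH]
      have step1 : (∏ f ∈ F1, ((y : ℝ) - (f : ℝ))) * (∏ g ∈ img.erase (y:ℤ), ((y:ℝ) - (g:ℝ))) =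
          (∏ h ∈ F1 ∪ img.erase (y:ℤ), ((y:ℝ) - (h:ℝ))) *
          (∏ h ∈ F1 ∩ img.erase (y:ℤ), ((y:ℝ) - (h:ℝ))) := Finset.prod_union_inter.symm
      have step2 : (∏ h ∈ F1 ∪ img.erase (y:ℤ), ((y:ℝ) - (h:ℝ))) =
          (∏ h ∈ (F1 ∪ img) \ Finset.Icc 0 (-c0), ((y:ℝ) - (h:ℝ))) *
          ((y.factorial : ℝ) * ((-1)^m * (m.factorial : ℝ))) := by
        rw [hsplit1, hsplit3, Finset.prod_union hdisj2, hsplit4, Finset.prod_union hdisj3,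
          hIcoprod, hIocprod]
      calc (∏ f ∈ F1, ((y : ℝ) - (f : ℝ))) * (∏ g ∈ img.erase (y:ℤ), ((y:ℝ) - (g:ℝ))) *
            a ^ y * (1 / ((-1)^m * (m.factorial : ℝ))) / (y.factorial : ℝ)
          = (∏ h ∈ (F1 ∪ img) \ Finset.Icc 0 (-c0), ((y:ℝ) - (h:ℝ))) *
            ((y.factorial : ℝ) * ((-1)^m * (m.factorial : ℝ))) *
            (∏ h ∈ F1 ∩ img, ((y:ℝ) - (h:ℝ))) *
            a ^ y * (1 / ((-1)^m * (m.factorial : ℝ))) / (y.factorial : ℝ) := by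
            rw [step1, step2, hsplit2]
        _ = (∏ h ∈ (F1 ∪ img) \ Finset.Icc 0 (-c0), ((y:ℝ) - (h:ℝ))) *
            (∏ h ∈ F1 ∩ img, ((y:ℝ) - (h:ℝ))) * a ^ y := by
            field_simp
    have hT : Filter.Tendsto (fun s => G (c s)) Filter.atTop
        (nhds ((∏ h ∈ H, ((y : ℝ) - (h : ℝ))) * a ^ y)) := hval ▸ hGcont.tendsto.comp hc
    exact hT.congr (fun s => (heq s).symm)
end

section
/- Let ĉ ∈ {-1,-2,...} and let F_1, F_2 be finite sets of positive integers satisfying {0,1,...,-ĉ} ⊆ F_1 ∪ (-ĉ - F_2). Then the measure ν = Σ_{x ≥ 0, x ∉ F_1} ∏_{h ∈ H}(x - h) a^x δ_x, with H defined as usual, is not of the form C · Σ_{x ≥ s} ∏_{f ∈ U_1}(x - s - f) ∏_{f ∈ U_2}(x - s + d + f) b^{x-s} Γ(x - s + d)/(x-s)! δ_x for any pair (U_1, U_2) of finite sets of positive integers, any real numbers b, C with 0 < b < 1, C > 0, any d ∉ {0,-1,-2,...}, and any integer s; i.e., ν is not a translated Christoffel transform of a Meixner measure. -/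
private lemma eval_lin_prod {ι : Type*} (s : Finset ι) (r : ι → ℝ) (x : ℝ) :
    Polynomial.eval x (∏ i ∈ s, (Polynomial.X - Polynomial.C (r i))) = ∏ i ∈ s, (x - r i) := by
  simp [Polynomial.eval_prod]

private lemma monic_lin_prod {ι : Type*} (s : Finset ι) (r : ι → ℝ) :
    (∏ i ∈ s, (Polynomial.X - Polynomial.C (r i))).Monic :=
  Polynomial.monic_prod_of_monic _ _ fun _ _ => Polynomial.monic_X_sub_C _

private lemma fact_prod_real (n k : ℕ) :
    (((n + k).factorial : ℕ) : ℝ) = (n.factorial : ℝ) * ∏ j ∈ Finset.range k, ((n : ℝ) + 1 + j) := by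
  induction k with
  | zero => simp
  | succ k ih =>
      rw [show n + (k+1) = (n+k)+1 from rfl, Nat.factorial_succ, Finset.prod_range_succ]
      push_cast
      rw [ih]
      ring

private lemma lead_C_mul_monic {p : Polynomial ℝ} (hp : p.Monic) (c : ℝ) :
    (Polynomial.C c * p).leadingCoeff = c := by
  rw [Polynomial.leadingCoeff_mul, Polynomial.leadingCoeff_C, hp.leadingCoeff, mul_one]

private lemma cast_toNat (y : ℤ) (hy : 0 ≤ y) : ((y.toNat : ℕ) : ℝ) = (y : ℝ) := by
  exact_mod_cast congrArg (Int.cast : ℤ → ℝ) (Int.toNat_of_nonneg hy)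

/-- For `ĉ ∈ {-1,-2,…}` and `F₁, F₂` finite sets of positive integers with
`{0,…,-ĉ} ⊆ F₁ ∪ (-ĉ - F₂)`, the measure
`ν = Σ_{x≥0, x∉F₁} ∏_{h∈H}(x-h) a^x δ_x` is never of the form
`C·ρ^{(U₁,U₂)}_{b,d}(x-s)`, i.e. never a translated Christoffel transform of a
Meixner measure. -/
theorem nu_not_christoffel_meixner
    (a : ℝ) (ha : 0 < a) (ha1 : a < 1)
    (c0 : ℤ) (hc0 : c0 < 0)
    (F1 F2 : Finset ℤ) (h1 : ∀ f ∈ F1, 0 < f) (h2 : ∀ f ∈ F2, 0 < f)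
    (hsub : Finset.Icc 0 (-c0) ⊆ F1 ∪ F2.image (fun f => -c0 - f))
    (H : Finset ℤ)
    (hH : H = ((F1 ∪ F2.image (fun f => -c0 - f)) \ Finset.Icc 0 (-c0)) ∪
      (F1 ∩ F2.image (fun f => -c0 - f)))
    (ν : ℤ → ℝ)
    (hν : ∀ y : ℤ, ν y = if 0 ≤ y ∧ y ∉ F1 then
      (∏ h ∈ H, ((y : ℝ) - (h : ℝ))) * a ^ y.toNat else 0) :
    ¬ ∃ (U1 U2 : Finset ℤ) (b C d : ℝ) (s : ℤ),
      (∀ f ∈ U1, 0 < f) ∧ (∀ f ∈ U2, 0 < f) ∧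
      0 < b ∧ b < 1 ∧ 0 < C ∧ (∀ n : ℕ, d ≠ -(n : ℝ)) ∧
      (∀ y : ℤ, ν y = if s ≤ y then
        C * (∏ f ∈ U1, ((y : ℝ) - (s : ℝ) - (f : ℝ))) *
          (∏ f ∈ U2, ((y : ℝ) - (s : ℝ) + d + (f : ℝ))) *
          b ^ (y - s).toNat * Real.Gamma ((y : ℝ) - (s : ℝ) + d) /
          ((y - s).toNat.factorial : ℝ)
        else 0) := by
  rintro ⟨U1, U2, b, C, d, s, hU1, hU2, hb, hb1, hC, hd, hB⟩
  have h0F1 : (0:ℤ) ∉ F1 := fun h => absurd (h1 0 h) (lt_irrefl 0)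
  -- elements of H are nonzero
  have hHne0 : ∀ h ∈ H, h ≠ 0 := by
    intro h hh
    rw [hH] at hh
    rcases Finset.mem_union.1 hh with hh | hh
    · rcases Finset.mem_sdiff.1 hh with ⟨_, hn⟩
      intro h0
      exact hn (Finset.mem_Icc.2 ⟨le_of_eq h0.symm, by omega⟩)
    · have := h1 h (Finset.mem_inter.1 hh).1; omega
  -- -c0 ∉ H
  have hnc0H : (-c0) ∉ H := by
    rw [hH]; intro hh
    rcases Finset.mem_union.1 hh with hh | hh
    · exact (Finset.mem_sdiff.1 hh).2 (Finset.mem_Icc.2 ⟨by omega, le_refl _⟩)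
    · rcases Finset.mem_image.1 (Finset.mem_inter.1 hh).2 with ⟨f, hf, hfe⟩
      have := h2 f hf; omega
  -- -c0 ∈ F1
  have hnc0F1 : (-c0) ∈ F1 := by
    have := hsub (Finset.mem_Icc.2 ⟨by omega, le_refl _⟩)
    rcases Finset.mem_union.1 this with h | h
    · exact h
    · rcases Finset.mem_image.1 h with ⟨f, hf, hfe⟩
      have := h2 f hf; omega
  -- Gamma values are nonzero
  have hGam : ∀ z : ℤ, 0 ≤ z → Real.Gamma ((z:ℝ) + d) ≠ 0 := by
    intro z hz
    apply Real.Gamma_ne_zero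
    intro m hm
    refine hd (m + z.toNat) ?_
    have := cast_toNat z hz
    push_cast
    rw [this]
    linarith
  have hU2nz : ∀ z : ℤ, 0 ≤ z → ∀ f ∈ U2, (z:ℝ) + d + (f:ℝ) ≠ 0 := by
    intro z hz f hf he
    refine hd ((z + f).toNat) ?_
    have hp : (0:ℤ) ≤ z + f := by have := hU2 f hf; omega
    have := cast_toNat (z+f) hp
    push_cast at this
    rw [this]
    push_cast
    linarith
  -- ν 0 ≠ 0
  have hν0 : ν 0 ≠ 0 := by
    rw [hν 0, if_pos ⟨le_refl (0:ℤ), h0F1⟩]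
    refine mul_ne_zero (Finset.prod_ne_zero_iff.2 fun h hh => ?_) (pow_ne_zero _ ha.ne')
    have : ((0:ℤ):ℝ) ≠ (h:ℝ) := by exact_mod_cast (hHne0 h hh).symm
    exact sub_ne_zero_of_ne this
  -- s = 0
  have hs0 : s = 0 := by
    have hsle : s ≤ 0 := by
      by_contra hs
      have := hB 0
      rw [if_neg (by omega)] at this
      exact hν0 this
    have hνs : ν s ≠ 0 := by
      rw [hB s, if_pos (le_refl s)]
      have e1 : s - s = 0 := sub_self s
      rw [e1]
      have e0 : (s:ℝ) - (s:ℝ) = 0 := sub_self _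
      rw [e0]
      simp only [Int.toNat_zero, pow_zero, Nat.factorial_zero, Nat.cast_one, div_one, mul_one,
        zero_sub, zero_add]
      refine mul_ne_zero (mul_ne_zero (mul_ne_zero hC.ne' ?_) ?_) ?_
      · refine Finset.prod_ne_zero_iff.2 fun f hf => ?_
        have : (0:ℝ) < (f:ℝ) := by exact_mod_cast hU1 f hf
        intro he; rw [neg_eq_zero] at he; linarith
      · refine Finset.prod_ne_zero_iff.2 fun f hf => ?_
        have := hU2nz 0 le_rfl f hf
        simpa using this
      · have := hGam 0 le_rfl
        simpa using this
    have : 0 ≤ s := by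
      by_contra hs
      have := hν s
      rw [if_neg (by omega)] at this
      exact hνs this
    omega
  subst hs0
  -- cleaned form of the Meixner representation
  have hB' : ∀ y : ℤ, 0 ≤ y → ν y = C * (∏ f ∈ U1, ((y:ℝ) - (f:ℝ))) *
      (∏ f ∈ U2, ((y:ℝ) + d + (f:ℝ))) * b ^ y.toNat *
      Real.Gamma ((y:ℝ) + d) / (y.toNat.factorial : ℝ) := by
    intro y hy
    rw [hB y, if_pos hy]
    simp only [Int.cast_zero, sub_zero, Int.sub_zero]
  have hν' : ∀ y : ℤ, 0 ≤ y → y ∉ F1 →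
      ν y = (∏ h ∈ H, ((y : ℝ) - (h : ℝ))) * a ^ y.toNat := by
    intro y hy hyF
    rw [hν y, if_pos ⟨hy, hyF⟩]
  -- -c0 ∈ U1
  have hνc0 : ν (-c0) = 0 := by
    rw [hν (-c0)]
    exact if_neg (fun hcon => hcon.2 hnc0F1)
  have hc0U1 : (-c0) ∈ U1 := by
    have h0 := (hB' (-c0) (by omega)).symm.trans hνc0
    rw [div_eq_zero_iff] at h0
    rcases h0 with h0 | h0
    · have hP1 : (∏ f ∈ U1, (((-c0:ℤ):ℝ) - (f:ℝ))) = 0 := by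
        by_contra hne
        have hP2 : (∏ f ∈ U2, (((-c0:ℤ):ℝ) + d + (f:ℝ))) ≠ 0 :=
          Finset.prod_ne_zero_iff.2 fun f hf => hU2nz (-c0) (by omega) f hf
        exact (mul_ne_zero (mul_ne_zero (mul_ne_zero (mul_ne_zero hC.ne' hne) hP2)
          (pow_ne_zero _ hb.ne')) (hGam (-c0) (by omega))) h0
      rcases Finset.prod_eq_zero_iff.1 hP1 with ⟨f, hf, hfe⟩
      have : ((-c0:ℤ):ℝ) = (f:ℝ) := by linarith [sub_eq_zero.1 hfe]
      have : (-c0:ℤ) = f := by exact_mod_cast this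
      rwa [this]
    · exact absurd h0 (Nat.cast_ne_zero.2 (Nat.factorial_ne_zero _))
  -- bound for F1
  obtain ⟨B, hBpos, hBF⟩ : ∃ B : ℤ, 0 ≤ B ∧ ∀ y : ℤ, B < y → y ∉ F1 := by
    refine ⟨((F1.sup fun f => f.toNat : ℕ) : ℤ), Int.natCast_nonneg _, fun y hy hmem => ?_⟩
    have h : y.toNat ≤ (F1.sup fun f => f.toNat) :=
      Finset.le_sup (f := fun f : ℤ => f.toNat) hmem
    omega
  -- the key pointwise relation
  have key : ∀ y : ℤ, 0 ≤ y → y ∉ F1 → (y+1) ∉ F1 →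
      a * ((y:ℝ)+1) * (∏ h ∈ H, ((y:ℝ) + 1 - (h:ℝ))) *
        ((∏ f ∈ U1, ((y:ℝ) - (f:ℝ))) * (∏ f ∈ U2, ((y:ℝ) + d + (f:ℝ))))
      = b * ((y:ℝ)+d) * (∏ h ∈ H, ((y:ℝ) - (h:ℝ))) *
        ((∏ f ∈ U1, ((y:ℝ) + 1 - (f:ℝ))) * (∏ f ∈ U2, ((y:ℝ) + 1 + d + (f:ℝ)))) := by
    intro y hy hyF hy1F
    have hcast : ((y.toNat : ℕ) : ℝ) = (y : ℝ) := cast_toNat y hy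
    have hfne : ((y.toNat.factorial : ℕ) : ℝ) ≠ 0 :=
      Nat.cast_ne_zero.2 (Nat.factorial_ne_zero _)
    have e1 := (hν' y hy hyF).symm.trans (hB' y hy)
    rw [eq_div_iff hfne] at e1
    -- at y+1
    have ht : (y+1).toNat = y.toNat + 1 := by omega
    have e2a := hν' (y+1) (by omega) hy1F
    have e2b := hB' (y+1) (by omega)
    rw [ht] at e2a e2b
    rw [Nat.factorial_succ] at e2b
    push_cast at e2a e2b
    rw [hcast] at e2b
    have hyd : (y:ℝ) + d ≠ 0 := by
      intro he
      refine hd y.toNat ?_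
      rw [hcast]
      linarith
    rw [show (y:ℝ) + 1 + d = ((y:ℝ) + d) + 1 by ring, Real.Gamma_add_one hyd] at e2b
    have e2 := e2a.symm.trans e2b
    rw [eq_div_iff (by positivity : (((y:ℝ) + 1) * (y.toNat.factorial : ℝ)) ≠ 0)] at e2
    rw [show (∏ x ∈ U2, ((y:ℝ) + d + 1 + (x:ℝ))) = ∏ f ∈ U2, ((y:ℝ) + 1 + d + (f:ℝ)) from
      Finset.prod_congr rfl fun f _ => by ring] at e2
    have hfac : (C * b ^ y.toNat * Real.Gamma ((y:ℝ)+d)) ≠ 0 :=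
      mul_ne_zero (mul_ne_zero hC.ne' (pow_ne_zero _ hb.ne')) (hGam y hy)
    apply mul_right_cancel₀ hfac
    linear_combination (-(a * ((y:ℝ)+1) * (∏ h ∈ H, ((y:ℝ) + 1 - (h:ℝ))))) * e1
      + (∏ h ∈ H, ((y:ℝ) - (h:ℝ))) * e2
  -- polynomial identity 1
  have hEval1 : ∀ x : ℝ, Polynomial.eval x
      (Polynomial.C a * ((Polynomial.X - Polynomial.C (-1:ℝ)) *
        (∏ h ∈ H, (Polynomial.X - Polynomial.C ((h:ℝ) - 1))) *
        ((∏ f ∈ U1, (Polynomial.X - Polynomial.C (f:ℝ))) *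
         (∏ f ∈ U2, (Polynomial.X - Polynomial.C (-d - (f:ℝ)))))))
      = a * (x+1) * (∏ h ∈ H, (x + 1 - (h:ℝ))) *
        ((∏ f ∈ U1, (x - (f:ℝ))) * (∏ f ∈ U2, (x + d + (f:ℝ)))) := by
    intro x
    simp only [Polynomial.eval_mul, Polynomial.eval_sub, Polynomial.eval_X, Polynomial.eval_C,
      eval_lin_prod]
    rw [show (∏ h ∈ H, (x - ((h:ℝ) - 1))) = ∏ h ∈ H, (x + 1 - (h:ℝ)) from
        Finset.prod_congr rfl fun h _ => by ring,
      show (∏ f ∈ U2, (x - (-d - (f:ℝ)))) = ∏ f ∈ U2, (x + d + (f:ℝ)) from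
        Finset.prod_congr rfl fun f _ => by ring]
    ring
  have hEval2 : ∀ x : ℝ, Polynomial.eval x
      (Polynomial.C b * ((Polynomial.X - Polynomial.C (-d)) *
        (∏ h ∈ H, (Polynomial.X - Polynomial.C (h:ℝ))) *
        ((∏ f ∈ U1, (Polynomial.X - Polynomial.C ((f:ℝ) - 1))) *
         (∏ f ∈ U2, (Polynomial.X - Polynomial.C (-d - (f:ℝ) - 1))))))
      = b * (x+d) * (∏ h ∈ H, (x - (h:ℝ))) *
        ((∏ f ∈ U1, (x + 1 - (f:ℝ))) * (∏ f ∈ U2, (x + 1 + d + (f:ℝ)))) := by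
    intro x
    simp only [Polynomial.eval_mul, Polynomial.eval_sub, Polynomial.eval_X, Polynomial.eval_C,
      eval_lin_prod]
    rw [show (∏ f ∈ U1, (x - ((f:ℝ) - 1))) = ∏ f ∈ U1, (x + 1 - (f:ℝ)) from
        Finset.prod_congr rfl fun f _ => by ring,
      show (∏ f ∈ U2, (x - (-d - (f:ℝ) - 1))) = ∏ f ∈ U2, (x + 1 + d + (f:ℝ)) from
        Finset.prod_congr rfl fun f _ => by ring]
    ring
  have hinf : ((fun y : ℤ => (y:ℝ)) '' Set.Ioi B).Infinite :=
    (Set.Ioi_infinite B).image (fun x _ y _ h => by exact_mod_cast h)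
  have hPoly1 : Polynomial.C a * ((Polynomial.X - Polynomial.C (-1:ℝ)) *
        (∏ h ∈ H, (Polynomial.X - Polynomial.C ((h:ℝ) - 1))) *
        ((∏ f ∈ U1, (Polynomial.X - Polynomial.C (f:ℝ))) *
         (∏ f ∈ U2, (Polynomial.X - Polynomial.C (-d - (f:ℝ))))))
      = Polynomial.C b * ((Polynomial.X - Polynomial.C (-d)) *
        (∏ h ∈ H, (Polynomial.X - Polynomial.C (h:ℝ))) *
        ((∏ f ∈ U1, (Polynomial.X - Polynomial.C ((f:ℝ) - 1))) *
         (∏ f ∈ U2, (Polynomial.X - Polynomial.C (-d - (f:ℝ) - 1))))) := by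
    apply Polynomial.eq_of_infinite_eval_eq
    apply Set.Infinite.mono _ hinf
    rintro x ⟨y, hy, rfl⟩
    have hy' : B < y := hy
    simp only [Set.mem_setOf_eq]
    rw [hEval1, hEval2]
    exact key y (by omega) (hBF y (by omega)) (hBF (y+1) (by omega))
  -- a = b
  have hM1 : ((Polynomial.X - Polynomial.C (-1:ℝ)) *
        (∏ h ∈ H, (Polynomial.X - Polynomial.C ((h:ℝ) - 1))) *
        ((∏ f ∈ U1, (Polynomial.X - Polynomial.C (f:ℝ))) *
         (∏ f ∈ U2, (Polynomial.X - Polynomial.C (-d - (f:ℝ)))))).Monic :=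
    (((Polynomial.monic_X_sub_C _).mul (monic_lin_prod _ _)).mul
      ((monic_lin_prod _ _).mul (monic_lin_prod _ _)))
  have hM2 : ((Polynomial.X - Polynomial.C (-d)) *
        (∏ h ∈ H, (Polynomial.X - Polynomial.C (h:ℝ))) *
        ((∏ f ∈ U1, (Polynomial.X - Polynomial.C ((f:ℝ) - 1))) *
         (∏ f ∈ U2, (Polynomial.X - Polynomial.C (-d - (f:ℝ) - 1))))).Monic :=
    (((Polynomial.monic_X_sub_C _).mul (monic_lin_prod _ _)).mul
      ((monic_lin_prod _ _).mul (monic_lin_prod _ _)))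
  have hab : a = b := by
    have h := congrArg Polynomial.leadingCoeff hPoly1
    rwa [lead_C_mul_monic hM1, lead_C_mul_monic hM2] at h
  -- d = k + 1 for a natural k
  obtain ⟨k, hk⟩ : ∃ k : ℕ, d = (k:ℝ) + 1 := by
    have h0 : a * (-d+1) * (∏ h ∈ H, (-d + 1 - (h:ℝ))) *
        ((∏ f ∈ U1, (-d - (f:ℝ))) * (∏ f ∈ U2, (-d + d + (f:ℝ)))) = 0 := by
      rw [← hEval1 (-d), hPoly1, hEval2 (-d)]
      rw [show -d + d = (0:ℝ) by ring]
      ring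
    rcases mul_eq_zero.1 h0 with h0 | h0
    · rcases mul_eq_zero.1 h0 with h0 | h0
      · rcases mul_eq_zero.1 h0 with h0 | h0
        · exact absurd h0 ha.ne'
        · exact ⟨0, by push_cast; linarith⟩
      · rcases Finset.prod_eq_zero_iff.1 h0 with ⟨h, hh, hhe⟩
        have hd1 : d = 1 - (h:ℝ) := by linarith
        by_cases hge : 1 ≤ h
        · exfalso
          refine hd (h-1).toNat ?_
          have : (((h-1).toNat : ℕ) : ℝ) = (h:ℝ) - 1 := by
            have := cast_toNat (h-1) (by omega)
            push_cast at this
            linarith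
          rw [this]; linarith
        · refine ⟨(-h).toNat, ?_⟩
          have : (((-h).toNat : ℕ) : ℝ) = -(h:ℝ) := by
            have := cast_toNat (-h) (by omega)
            push_cast at this
            linarith
          rw [this]; linarith
    · rcases mul_eq_zero.1 h0 with h0 | h0
      · rcases Finset.prod_eq_zero_iff.1 h0 with ⟨f, hf, hfe⟩
        exfalso
        refine hd f.toNat ?_
        have := cast_toNat f (le_of_lt (hU1 f hf))
        rw [this]; linarith
      · rcases Finset.prod_eq_zero_iff.1 h0 with ⟨f, hf, hfe⟩
        exfalso
        have h0f : (0:ℝ) < (f:ℝ) := by exact_mod_cast hU2 f hf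
        have : -d + d + (f:ℝ) = (f:ℝ) := by ring
        rw [this] at hfe
        linarith
  -- second pointwise relation
  have key2 : ∀ y : ℤ, 0 ≤ y → y ∉ F1 →
      (∏ h ∈ H, ((y:ℝ) - (h:ℝ))) = C * ((∏ f ∈ U1, ((y:ℝ) - (f:ℝ))) *
        (∏ f ∈ U2, ((y:ℝ) + d + (f:ℝ))) *
        (∏ j ∈ Finset.range k, ((y:ℝ) + 1 + (j:ℝ)))) := by
    intro y hy hyF
    have hcast : ((y.toNat : ℕ) : ℝ) = (y : ℝ) := cast_toNat y hy
    have hfne : ((y.toNat.factorial : ℕ) : ℝ) ≠ 0 :=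
      Nat.cast_ne_zero.2 (Nat.factorial_ne_zero _)
    have e1 := (hν' y hy hyF).symm.trans (hB' y hy)
    rw [eq_div_iff hfne, ← hab] at e1
    have hGamEq : Real.Gamma ((y:ℝ) + d) = (((y.toNat + k).factorial : ℕ) : ℝ) := by
      rw [show (y:ℝ) + d = (((y.toNat + k : ℕ)):ℝ) + 1 by push_cast; rw [hcast, hk]; ring]
      exact Real.Gamma_nat_eq_factorial _
    rw [hGamEq, fact_prod_real, hcast] at e1
    have hcancel : (a ^ y.toNat * ((y.toNat.factorial : ℕ) : ℝ)) ≠ 0 :=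
      mul_ne_zero (pow_ne_zero _ ha.ne') hfne
    apply mul_right_cancel₀ hcancel
    linear_combination e1
  -- polynomial identity 2
  have hEval3 : ∀ x : ℝ, Polynomial.eval x
      (∏ h ∈ H, (Polynomial.X - Polynomial.C (h:ℝ))) = ∏ h ∈ H, (x - (h:ℝ)) :=
    fun x => eval_lin_prod _ _ x
  have hEval4 : ∀ x : ℝ, Polynomial.eval x
      (Polynomial.C C * ((∏ f ∈ U1, (Polynomial.X - Polynomial.C (f:ℝ))) *
        (∏ f ∈ U2, (Polynomial.X - Polynomial.C (-d - (f:ℝ)))) *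
        (∏ j ∈ Finset.range k, (Polynomial.X - Polynomial.C (-1 - (j:ℝ))))))
      = C * ((∏ f ∈ U1, (x - (f:ℝ))) * (∏ f ∈ U2, (x + d + (f:ℝ))) *
        (∏ j ∈ Finset.range k, (x + 1 + (j:ℝ)))) := by
    intro x
    simp only [Polynomial.eval_mul, Polynomial.eval_C, eval_lin_prod]
    rw [show (∏ f ∈ U2, (x - (-d - (f:ℝ)))) = ∏ f ∈ U2, (x + d + (f:ℝ)) from
        Finset.prod_congr rfl fun f _ => by ring,
      show (∏ j ∈ Finset.range k, (x - (-1 - (j:ℝ)))) = ∏ j ∈ Finset.range k, (x + 1 + (j:ℝ)) from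
        Finset.prod_congr rfl fun j _ => by ring]
  have hPoly2 : (∏ h ∈ H, (Polynomial.X - Polynomial.C (h:ℝ)))
      = Polynomial.C C * ((∏ f ∈ U1, (Polynomial.X - Polynomial.C (f:ℝ))) *
        (∏ f ∈ U2, (Polynomial.X - Polynomial.C (-d - (f:ℝ)))) *
        (∏ j ∈ Finset.range k, (Polynomial.X - Polynomial.C (-1 - (j:ℝ))))) := by
    apply Polynomial.eq_of_infinite_eval_eq
    apply Set.Infinite.mono _ hinf
    rintro x ⟨y, hy, rfl⟩
    have hy' : B < y := hy
    simp only [Set.mem_setOf_eq]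
    rw [hEval3, hEval4]
    exact key2 y (by omega) (hBF y (by omega))
  -- final contradiction at y = -c0
  have hfin := congrArg (Polynomial.eval ((-c0:ℤ):ℝ)) hPoly2
  rw [hEval3, hEval4] at hfin
  have hL : (∏ h ∈ H, (((-c0:ℤ):ℝ) - (h:ℝ))) ≠ 0 := by
    refine Finset.prod_ne_zero_iff.2 fun h hh => sub_ne_zero_of_ne ?_
    intro he
    have : (-c0:ℤ) = h := by exact_mod_cast he
    exact hnc0H (this ▸ hh)
  have hR : (∏ f ∈ U1, (((-c0:ℤ):ℝ) - (f:ℝ))) = 0 :=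
    Finset.prod_eq_zero hc0U1 (by rw [sub_self])
  rw [hR] at hfin
  rw [hfin] at hL
  simp at hL
end

section
/- For the Laguerre polynomials L_n^α(x) = Σ_{j=0}^n ((-x)^j / j!)·C(n+α, n-j) and Meixner polynomials m_n^{a,c}(x) = (a^n/(1-a)^n) Σ_{j=0}^n a^{-j} C(x,j) C(-x-c, n-j), one has, for each fixed n, c and complex x: lim_{a→1} (a-1)^n m_n^{a,c}(x/(1-a)) = L_n^{c-1}(x). -/
open Filter Topology

/-- Generalized binomial coefficient `C(y,j) = y(y-1)⋯(y-j+1)/j!`. -/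
noncomputable def genBinom (y : ℂ) (j : ℕ) : ℂ :=
  (∏ i ∈ Finset.range j, (y - (i : ℂ))) / (j.factorial : ℂ)

/-- Meixner polynomial `m_n^{a,c}(x) = (a^n/(1-a)^n) Σ_j a^{-j} C(x,j) C(-x-c,n-j)`. -/
noncomputable def meixner (a c : ℝ) (n : ℕ) (x : ℂ) : ℂ :=
  ((a : ℂ) ^ n / (1 - (a : ℂ)) ^ n) *
    ∑ j ∈ Finset.range (n + 1),
      (a : ℂ) ^ (-(j : ℤ)) * genBinom x j * genBinom (-x - (c : ℂ)) (n - j)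

/-- Laguerre polynomial `L_n^α(x) = Σ_j ((-x)^j/j!) C(n+α, n-j)`. -/
noncomputable def laguerre (α : ℝ) (n : ℕ) (x : ℂ) : ℂ :=
  ∑ j ∈ Finset.range (n + 1),
    ((-x) ^ j / (j.factorial : ℂ)) * genBinom ((n : ℂ) + (α : ℂ)) (n - j)

lemma descPochhammer_smeval_complex (y : ℂ) (j : ℕ) :
    (descPochhammer ℤ j).smeval y = ∏ i ∈ Finset.range j, (y - (i : ℂ)) := by
  induction j with
  | zero => simp [descPochhammer_zero, Polynomial.smeval_one]
  | succ j ih =>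
      rw [descPochhammer_succ_right, Polynomial.smeval_mul, ih, Finset.prod_range_succ,
        Polynomial.smeval_sub, Polynomial.smeval_X, Polynomial.smeval_natCast]
      simp

lemma genBinom_eq_choose (y : ℂ) (j : ℕ) : genBinom y j = Ring.choose y j := by
  have h := Ring.descPochhammer_eq_factorial_smul_choose (R := ℂ) y j
  rw [descPochhammer_smeval_complex] at h
  rw [genBinom, h, nsmul_eq_mul, mul_div_cancel_left₀]
  exact_mod_cast j.factorial_ne_zero

/-- Chu–Vandermonde for `genBinom`. -/
lemma genBinom_add_eq (u v : ℂ) (N : ℕ) :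
    genBinom (u + v) N = ∑ m ∈ Finset.range (N + 1), genBinom u m * genBinom v (N - m) := by
  simp only [genBinom_eq_choose]
  rw [Ring.add_choose_eq N (Commute.all u v),
    Finset.Nat.sum_antidiagonal_eq_sum_range_succ_mk]

/-- Upper negation for `genBinom`. -/
lemma genBinom_neg (u : ℂ) (N : ℕ) :
    genBinom (-u) N = (-1) ^ N * genBinom (u + N - 1) N := by
  rw [genBinom, genBinom, ← mul_div_assoc]
  congr 1
  have h1 : ∏ i ∈ Finset.range N, (-u - (i : ℂ)) = (-1) ^ N * ∏ i ∈ Finset.range N, (u + i) := by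
    calc ∏ i ∈ Finset.range N, (-u - (i : ℂ))
        = ∏ i ∈ Finset.range N, ((-1) * (u + (i : ℂ))) :=
          Finset.prod_congr rfl fun i _ => by ring
      _ = (-1) ^ N * ∏ i ∈ Finset.range N, (u + i) := by
          rw [Finset.prod_mul_distrib, Finset.prod_const, Finset.card_range]
  have h2 : ∏ i ∈ Finset.range N, (u + (N : ℂ) - 1 - i) = ∏ i ∈ Finset.range N, (u + i) := by
    rw [← Finset.prod_range_reflect (fun i => u + (i : ℂ)) N]
    refine Finset.prod_congr rfl fun i hi => ?_
    have hi' : i + 1 ≤ N := Finset.mem_range.mp hi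
    have he : (N - 1 - i : ℕ) = N - (i + 1) := by omega
    rw [he, Nat.cast_sub hi']
    push_cast
    ring
  rw [h1, h2]

/-- Trinomial revision. -/
lemma genBinom_trinomial (y : ℂ) {j k : ℕ} (hjk : j ≤ k) :
    (k.choose j : ℂ) * genBinom y k = genBinom y j * genBinom (y - j) (k - j) := by
  simp only [genBinom_eq_choose]
  have h := Ring.choose_smul_choose (R := ℂ) y hjk
  rwa [nsmul_eq_mul] at h

/-- Alternating-sign Vandermonde variant. -/
lemma genBinom_alt_sum (w z : ℂ) (N : ℕ) :
    ∑ m ∈ Finset.range (N + 1),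
        (-1 : ℂ) ^ m * genBinom w m * genBinom (z - (m : ℂ)) (N - m)
      = genBinom (z - w) N := by
  have hterm : ∀ m ∈ Finset.range (N + 1),
      (-1 : ℂ) ^ m * genBinom w m * genBinom (z - (m : ℂ)) (N - m)
        = (-1 : ℂ) ^ N * (genBinom w m * genBinom ((N : ℂ) - z - 1) (N - m)) := by
    intro m hm
    have hmN : m ≤ N := Nat.lt_succ_iff.mp (Finset.mem_range.mp hm)
    have h1 : genBinom (z - (m : ℂ)) (N - m)
        = (-1 : ℂ) ^ (N - m) * genBinom ((N : ℂ) - z - 1) (N - m) := by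
      have h := genBinom_neg ((m : ℂ) - z) (N - m)
      rw [neg_sub] at h
      rw [h]
      congr 2
      rw [Nat.cast_sub hmN]
      ring
    have h2 : (-1 : ℂ) ^ m * (-1 : ℂ) ^ (N - m) = (-1) ^ N := by
      rw [← pow_add]
      congr 1
      omega
    rw [h1, ← h2]
    ring
  rw [Finset.sum_congr rfl hterm, ← Finset.mul_sum, ← genBinom_add_eq]
  have h := genBinom_neg (w - z) N
  rw [neg_sub] at h
  rw [h]
  congr 2
  ring

/-- Key identity transforming the Meixner sum. -/
lemma keyI (a : ℂ) (ha : a ≠ 0) (y c' : ℂ) (n : ℕ) :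
    ∑ j ∈ Finset.range (n + 1), a ^ (-(j : ℤ)) * genBinom y j * genBinom (-y - c') (n - j)
      = ∑ k ∈ Finset.range (n + 1),
          genBinom y k * ((1 - a) / a) ^ k * genBinom (-c' - (k : ℂ)) (n - k) := by
  have hpow : ∀ k : ℕ, ((1 - a) / a) ^ k
      = ∑ j ∈ Finset.range (k + 1), (a⁻¹) ^ j * (-1 : ℂ) ^ (k - j) * (k.choose j : ℂ) := by
    intro k
    rw [show (1 - a) / a = a⁻¹ + (-1) by field_simp; ring]
    exact add_pow a⁻¹ (-1) k
  symm
  calc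
    ∑ k ∈ Finset.range (n + 1),
        genBinom y k * ((1 - a) / a) ^ k * genBinom (-c' - (k : ℂ)) (n - k)
      = ∑ k ∈ Finset.range (n + 1), ∑ j ∈ Finset.range (k + 1),
          genBinom y k * ((a⁻¹) ^ j * (-1 : ℂ) ^ (k - j) * (k.choose j : ℂ))
            * genBinom (-c' - (k : ℂ)) (n - k) := by
        refine Finset.sum_congr rfl fun k _ => ?_
        rw [hpow k, Finset.mul_sum, Finset.sum_mul]
    _ = ∑ j ∈ Finset.range (n + 1), ∑ k ∈ Finset.Icc j n,
          genBinom y k * ((a⁻¹) ^ j * (-1 : ℂ) ^ (k - j) * (k.choose j : ℂ))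
            * genBinom (-c' - (k : ℂ)) (n - k) := by
        refine Finset.sum_comm' fun k j => ?_
        simp only [Finset.mem_range, Finset.mem_Icc, Nat.lt_succ_iff]
        omega
    _ = ∑ j ∈ Finset.range (n + 1),
          a ^ (-(j : ℤ)) * genBinom y j * genBinom (-y - c') (n - j) := by
        refine Finset.sum_congr rfl fun j hj => ?_
        have hjn : j ≤ n := Nat.lt_succ_iff.mp (Finset.mem_range.mp hj)
        rw [← Finset.Ico_add_one_right_eq_Icc, Finset.sum_Ico_eq_sum_range,
          show n + 1 - j = (n - j) + 1 by omega]
        have hterm : ∀ m ∈ Finset.range ((n - j) + 1),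
            genBinom y (j + m) * ((a⁻¹) ^ j * (-1 : ℂ) ^ (j + m - j) * ((j + m).choose j : ℂ))
              * genBinom (-c' - ((j + m : ℕ) : ℂ)) (n - (j + m))
            = (a⁻¹) ^ j * genBinom y j *
                ((-1 : ℂ) ^ m * genBinom (y - j) m
                  * genBinom ((-c' - (j : ℂ)) - (m : ℂ)) ((n - j) - m)) := by
          intro m _
          have htri := genBinom_trinomial y (Nat.le_add_right j m)
          rw [Nat.add_sub_cancel_left] at htri
          rw [Nat.add_sub_cancel_left,
            show (-c' - ((j + m : ℕ) : ℂ)) = (-c' - (j : ℂ)) - (m : ℂ) by push_cast; ring,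
            ← Nat.sub_sub]
          linear_combination ((a⁻¹) ^ j * (-1 : ℂ) ^ m
            * genBinom ((-c' - (j : ℂ)) - (m : ℂ)) ((n - j) - m)) * htri
        rw [Finset.sum_congr rfl hterm, ← Finset.mul_sum, genBinom_alt_sum,
          show (-c' - (j : ℂ)) - (y - j) = -y - c' by ring,
          zpow_neg, zpow_natCast, ← inv_pow]

/-- Basic limit from Meixner to Laguerre polynomials:
`lim_{a→1} (a-1)^n m_n^{a,c}(x/(1-a)) = L_n^{c-1}(x)`. -/
theorem meixner_to_laguerre_limit (n : ℕ) (c : ℝ) (x : ℂ) :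
    Filter.Tendsto
      (fun a : ℝ => ((a : ℂ) - 1) ^ n * meixner a c n (x / (1 - (a : ℂ))))
      (nhdsWithin 1 {a : ℝ | a ≠ 0 ∧ a ≠ 1})
      (nhds (laguerre (c - 1) n x)) := by
  set g : ℝ → ℂ := fun a => (-1 : ℂ) ^ n *
    ∑ k ∈ Finset.range (n + 1),
      ((a : ℂ)) ^ (n - k) *
        ((∏ i ∈ Finset.range k, (x - (i : ℂ) * (1 - (a : ℂ)))) / (k.factorial : ℂ)) *
        genBinom (-(c : ℂ) - (k : ℂ)) (n - k) with hgdef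
  have hcont : Continuous g := by
    apply continuous_const.mul
    refine continuous_finset_sum _ fun k _ => ?_
    refine Continuous.mul (Continuous.mul ?_ ?_) continuous_const
    · exact (continuous_pow (n - k)).comp Complex.continuous_ofReal
    · exact Continuous.div_const (continuous_finset_prod _ fun i _ =>
        continuous_const.sub (continuous_const.mul
          (continuous_const.sub Complex.continuous_ofReal))) _
  have hg1 : g 1 = laguerre (c - 1) n x := by
    rw [hgdef]
    dsimp only
    rw [laguerre, Finset.mul_sum]
    refine Finset.sum_congr rfl fun k hk => ?_
    have hkn : k ≤ n := Nat.lt_succ_iff.mp (Finset.mem_range.mp hk)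
    have e1 : genBinom (-(c : ℂ) - (k : ℂ)) (n - k)
        = (-1 : ℂ) ^ (n - k) * genBinom ((n : ℂ) + ((c - 1 : ℝ) : ℂ)) (n - k) := by
      have h := genBinom_neg ((c : ℂ) + k) (n - k)
      rw [show -((c : ℂ) + k) = -(c : ℂ) - k by ring] at h
      rw [h]
      congr 2
      push_cast [Nat.cast_sub hkn]
      ring
    have hsign : (-1 : ℂ) ^ n * (-1 : ℂ) ^ (n - k) = (-1) ^ k := by
      rw [← pow_add, show n + (n - k) = k + 2 * (n - k) by omega, pow_add, pow_mul,
        neg_one_sq, one_pow, mul_one]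
    rw [e1]
    simp only [Complex.ofReal_one, sub_self, mul_zero, sub_zero, Finset.prod_const,
      Finset.card_range, one_pow, one_mul]
    rw [neg_pow x k]
    linear_combination (x ^ k / (k.factorial : ℂ)
      * genBinom ((n : ℂ) + ((c - 1 : ℝ) : ℂ)) (n - k)) * hsign
  have heq : ∀ a ∈ {a : ℝ | a ≠ 0 ∧ a ≠ 1},
      ((a : ℂ) - 1) ^ n * meixner a c n (x / (1 - (a : ℂ))) = g a := by
    intro a ha
    have ha0 : (a : ℂ) ≠ 0 := by exact_mod_cast ha.1
    have ha1 : (1 : ℂ) - (a : ℂ) ≠ 0 := by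
      rw [sub_ne_zero]
      exact fun h => ha.2 (by exact_mod_cast h.symm)
    rw [meixner, keyI _ ha0, hgdef]
    dsimp only
    rw [Finset.mul_sum, Finset.mul_sum, Finset.mul_sum]
    refine Finset.sum_congr rfl fun k hk => ?_
    have hkn : k ≤ n := Nat.lt_succ_iff.mp (Finset.mem_range.mp hk)
    obtain ⟨m, rfl⟩ : ∃ m, n = k + m := ⟨n - k, by omega⟩
    simp only [Nat.add_sub_cancel_left]
    have hy : genBinom (x / (1 - (a : ℂ))) k
        = (∏ i ∈ Finset.range k, (x - (i : ℂ) * (1 - (a : ℂ))))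
            / ((1 - (a : ℂ)) ^ k * (k.factorial : ℂ)) := by
      rw [genBinom]
      rw [show (∏ i ∈ Finset.range k, (x / (1 - (a : ℂ)) - (i : ℂ)))
          = ∏ i ∈ Finset.range k, ((x - (i : ℂ) * (1 - (a : ℂ))) / (1 - (a : ℂ))) from
        Finset.prod_congr rfl fun i _ => by field_simp]
      rw [Finset.prod_div_distrib, Finset.prod_const, Finset.card_range, div_div]
    rw [hy, show ((a : ℂ) - 1) = (-1) * (1 - (a : ℂ)) by ring, mul_pow]
    have hkf : ((k.factorial : ℂ)) ≠ 0 := by exact_mod_cast k.factorial_ne_zero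
    field_simp
    rw [div_pow]
    field_simp
    ring
  have h2 : Tendsto g (nhdsWithin 1 {a : ℝ | a ≠ 0 ∧ a ≠ 1}) (nhds (laguerre (c - 1) n x)) := by
    rw [← hg1]
    exact (hcont.tendsto 1).mono_left nhdsWithin_le_nhds
  refine Filter.Tendsto.congr' ?_ h2
  exact eventually_mem_nhdsWithin.mono fun a ha => (heq a ha).symm
end

section
/- For c a nonpositive integer and n ≥ -c + 1, the Meixner polynomial satisfies the factorization m_n^{a,c}(x) = [∏_{j=0}^{-c}(x - j) / ∏_{j=0}^{-c}(n - j)] · m_{n+c-1}^{a, 2-c}(x + c - 1). -/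
open Finset

namespace MeixnerAux

lemma genBinom_zero (y : ℂ) : genBinom y 0 = 1 := by
  simp [genBinom]

lemma genBinom_one (y : ℂ) : genBinom y 1 = y := by
  simp [genBinom]

lemma factorial_cast_ne_zero (m : ℕ) : ((m.factorial : ℂ)) ≠ 0 := by
  exact_mod_cast m.factorial_ne_zero

lemma genBinom_succ_mul (y : ℂ) (r : ℕ) :
    ((r : ℂ) + 1) * genBinom y (r + 1) = (y - r) * genBinom y r := by
  have h1 : ((r.factorial : ℂ)) ≠ 0 := factorial_cast_ne_zero r
  have h2 : ((r : ℂ) + 1) ≠ 0 := Nat.cast_add_one_ne_zero r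
  rw [genBinom, genBinom, prod_range_succ, Nat.factorial_succ]
  push_cast
  field_simp

/-- The shifted sum `S B u v n = Σ_j B^j C(u,j) C(v,n-j)`. -/
noncomputable def S (B u v : ℂ) (n : ℕ) : ℂ :=
  ∑ j ∈ Finset.range (n + 1), B ^ j * genBinom u j * genBinom v (n - j)

lemma S_zero (B u v : ℂ) : S B u v 0 = 1 := by
  simp [S, genBinom_zero]

lemma S_one (B u v : ℂ) : S B u v 1 = v + B * u := by
  rw [S, Finset.sum_range_succ, Finset.sum_range_one]
  simp [genBinom_zero, genBinom_one]

lemma shift1 (B u v : ℂ) (N : ℕ) :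
    ∑ j ∈ range (N + 2), (j : ℂ) * (B ^ j * genBinom u j * genBinom v (N + 1 - j)) =
    B * ∑ j ∈ range (N + 1), (u - j) * (B ^ j * genBinom u j * genBinom v (N - j)) := by
  rw [Finset.sum_range_succ', Finset.mul_sum]
  simp only [Nat.cast_zero, zero_mul, add_zero]
  refine Finset.sum_congr rfl fun i hi => ?_
  have h : N + 1 - (i + 1) = N - i := by omega
  rw [h, pow_succ]
  have key := genBinom_succ_mul u i
  push_cast
  linear_combination (B ^ i * B * genBinom v (N - i)) * key

lemma shift2 (B u v : ℂ) (N : ℕ) :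
    ∑ j ∈ range (N + 2), (((N : ℂ) + 1) - j) * (B ^ j * genBinom u j * genBinom v (N + 1 - j)) =
    ∑ j ∈ range (N + 1), (v - ((N : ℂ) - j)) * (B ^ j * genBinom u j * genBinom v (N - j)) := by
  rw [Finset.sum_range_succ]
  have hz : (((N : ℂ) + 1) - ((N + 1 : ℕ) : ℂ)) = 0 := by push_cast; ring
  rw [hz, zero_mul, add_zero]
  refine Finset.sum_congr rfl fun j hj => ?_
  have hjN : j ≤ N := by have := Finset.mem_range.mp hj; omega
  have h1 : N + 1 - j = (N - j) + 1 := by omega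
  have h2 : (N : ℂ) - (j : ℂ) = ((N - j : ℕ) : ℂ) := by rw [Nat.cast_sub hjN]
  have h3 : ((N : ℂ) + 1) - (j : ℂ) = ((N - j : ℕ) : ℂ) + 1 := by rw [Nat.cast_sub hjN]; ring
  rw [h1, h2, h3]
  have key := genBinom_succ_mul v (N - j)
  linear_combination (B ^ j * genBinom u j) * key

lemma S_rec (B u v : ℂ) (n : ℕ) :
    ((n : ℂ) + 2) * S B u v (n + 2) =
      (B * u + v - (B + 1) * ((n : ℂ) + 1)) * S B u v (n + 1)
        + B * (u + v - (n : ℂ)) * S B u v n := by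
  have e1 : ((n : ℂ) + 2) * S B u v (n + 2)
      = (∑ j ∈ range (n + 3), (j : ℂ) * (B ^ j * genBinom u j * genBinom v (n + 2 - j)))
      + ∑ j ∈ range (n + 3),
          ((((n + 1 : ℕ) : ℂ) + 1) - j) * (B ^ j * genBinom u j * genBinom v (n + 2 - j)) := by
    rw [S, Finset.mul_sum, ← Finset.sum_add_distrib]
    refine Finset.sum_congr rfl fun j _ => ?_
    push_cast
    ring
  have h1 := shift1 B u v (n + 1)
  have h2 := shift2 B u v (n + 1)
  rw [e1, h1, h2]
  have e2 : B * (∑ j ∈ range (n + 2), (u - j) * (B ^ j * genBinom u j * genBinom v (n + 1 - j)))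
      + (∑ j ∈ range (n + 2),
          (v - (((n + 1 : ℕ) : ℂ) - j)) * (B ^ j * genBinom u j * genBinom v (n + 1 - j)))
      = (B * u + v - (B + 1) * ((n : ℂ) + 1)) * S B u v (n + 1)
        + ((∑ j ∈ range (n + 2), (j : ℂ) * (B ^ j * genBinom u j * genBinom v (n + 1 - j)))
          + B * ∑ j ∈ range (n + 2),
              (((n : ℂ) + 1) - j) * (B ^ j * genBinom u j * genBinom v (n + 1 - j))) := by
    rw [S, Finset.mul_sum, Finset.mul_sum, Finset.mul_sum,
      ← Finset.sum_add_distrib, ← Finset.sum_add_distrib, ← Finset.sum_add_distrib]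
    refine Finset.sum_congr rfl fun j _ => ?_
    push_cast
    ring
  rw [e2, shift1 B u v n, shift2 B u v n]
  congr 1
  rw [S, Finset.mul_sum, Finset.mul_sum, Finset.mul_sum, ← Finset.sum_add_distrib]
  refine Finset.sum_congr rfl fun j _ => ?_
  ring

lemma binom_prod (x : ℂ) (k j : ℕ) (hj : j ≤ k + 1) :
    genBinom x j * genBinom ((k : ℂ) - x) (k + 1 - j)
      = (-1) ^ (k + 1 - j) * ((k + 1).choose j : ℂ) * genBinom x (k + 1) := by
  set m := k + 1 - j with hm
  have hjm : j + m = k + 1 := by omega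
  have hfacN := Nat.choose_mul_factorial_mul_factorial hj
  have hfac : (((k + 1).choose j : ℂ)) * (j.factorial : ℂ) * (m.factorial : ℂ)
      = ((k + 1).factorial : ℂ) := by exact_mod_cast congrArg (fun t : ℕ => (t : ℂ)) hfacN
  have hsplit : (∏ i ∈ range j, (x - (i : ℂ))) * (∏ i ∈ range m, (x - ((j : ℂ) + i)))
      = ∏ i ∈ range (k + 1), (x - (i : ℂ)) := by
    rw [← hjm, Finset.prod_range_add]
    refine congrArg _ (Finset.prod_congr rfl fun i _ => ?_)
    push_cast
    ring
  have hprod : ∏ i ∈ range m, ((k : ℂ) - x - i)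
      = (-1) ^ m * ∏ i ∈ range m, (x - ((j : ℂ) + i)) := by
    rw [← Finset.prod_range_reflect (fun i => (x - ((j : ℂ) + i))) m]
    have hterm : ∀ i ∈ range m, ((k : ℂ) - x - i)
        = (-1) * (x - ((j : ℂ) + ((m - 1 - i : ℕ) : ℂ))) := by
      intro i hi
      have him : i < m := Finset.mem_range.mp hi
      have h1 : ((m - 1 - i : ℕ) : ℂ) = (m : ℂ) - 1 - i := by
        have : m - 1 - i = m - (1 + i) := by omega
        rw [this, Nat.cast_sub (by omega)]
        push_cast
        ring
      have h2 : (k : ℂ) = (j : ℂ) + m - 1 := by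
        have hcst : (j : ℂ) + m = (k : ℂ) + 1 := by exact_mod_cast hjm
        linear_combination -hcst
      rw [h1, h2]
      ring
    rw [Finset.prod_congr rfl hterm, Finset.prod_mul_distrib, Finset.prod_const,
      Finset.card_range]
  rw [genBinom, genBinom, genBinom, hprod]
  have hj0 : ((j.factorial : ℂ)) ≠ 0 := factorial_cast_ne_zero j
  have hm0 : ((m.factorial : ℂ)) ≠ 0 := factorial_cast_ne_zero m
  have hk0 : (((k + 1).factorial : ℂ)) ≠ 0 := factorial_cast_ne_zero (k + 1)
  field_simp
  linear_combination (((k + 1).factorial : ℂ)) * hsplit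
    - ((∏ i ∈ Finset.range (k + 1), (x - (i : ℂ)))) * hfac

lemma S_base (B x : ℂ) (k : ℕ) :
    S B x ((k : ℂ) - x) (k + 1) = (B - 1) ^ (k + 1) * genBinom x (k + 1) := by
  rw [S]
  have h : ∀ j ∈ range (k + 2),
      B ^ j * genBinom x j * genBinom ((k : ℂ) - x) (k + 1 - j)
        = (B ^ j * (-1) ^ (k + 1 - j) * (((k + 1).choose j : ℕ) : ℂ)) * genBinom x (k + 1) := by
    intro j hj
    have hj' : j ≤ k + 1 := by have := Finset.mem_range.mp hj; omega
    rw [mul_assoc, binom_prod x k j hj']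
    ring
  rw [Finset.sum_congr rfl h, ← Finset.sum_mul]
  congr 1
  rw [show B - 1 = B + (-1) by ring, add_pow B (-1 : ℂ) (k + 1)]

lemma claim (B x : ℂ) (k : ℕ) : ∀ d : ℕ,
    S B x ((k : ℂ) - x) (k + 1 + d) * ((k + 1 + d).factorial : ℂ)
      = genBinom x (k + 1) * ((k + 1).factorial : ℂ) * (B - 1) ^ (k + 1)
          * (d.factorial : ℂ) * S B (x - (k : ℂ) - 1) (-x - 1) d := by
  have hbase : S B x ((k : ℂ) - x) (k + 1) * ((k + 1).factorial : ℂ)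
      = genBinom x (k + 1) * ((k + 1).factorial : ℂ) * (B - 1) ^ (k + 1) := by
    rw [S_base]; ring
  intro d
  induction d using Nat.twoStepInduction with
  | zero =>
    simpa [S_zero] using hbase
  | one =>
    have hrec := S_rec B x ((k : ℂ) - x) k
    have hf : (((k + 2).factorial : ℂ)) = ((k : ℂ) + 2) * ((k + 1).factorial : ℂ) := by
      rw [show k + 2 = (k + 1) + 1 from rfl, Nat.factorial_succ]
      push_cast
      ring
    rw [show k + 1 + 1 = k + 2 by omega, S_one, hf]
    simp only [Nat.factorial_one, Nat.cast_one]
    linear_combination (((k + 1).factorial : ℂ)) * hrec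
      + (B * x + ((k : ℂ) - x) - (B + 1) * ((k : ℂ) + 1)) * hbase
  | more d ih0 ih1 =>
    have hrecL := S_rec B x ((k : ℂ) - x) (k + 1 + d)
    have hrecR := S_rec B (x - (k : ℂ) - 1) (-x - 1) d
    have hF2 : (((k + 1 + d + 2).factorial : ℂ))
        = (((k + 1 + d : ℕ) : ℂ) + 2) * ((((k + 1 + d : ℕ) : ℂ)) + 1)
            * ((k + 1 + d).factorial : ℂ) := by
      rw [show k + 1 + d + 2 = ((k + 1 + d) + 1) + 1 from rfl, Nat.factorial_succ,
        Nat.factorial_succ]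
      push_cast
      ring
    have hF1 : (((k + 1 + d + 1).factorial : ℂ))
        = (((k + 1 + d : ℕ) : ℂ) + 1) * ((k + 1 + d).factorial : ℂ) := by
      rw [Nat.factorial_succ]
      push_cast
      ring
    have hG2 : (((d + 2).factorial : ℂ))
        = ((d : ℂ) + 2) * ((d : ℂ) + 1) * (d.factorial : ℂ) := by
      rw [show d + 2 = (d + 1) + 1 from rfl, Nat.factorial_succ, Nat.factorial_succ]
      push_cast
      ring
    have hG1 : (((d + 1).factorial : ℂ)) = ((d : ℂ) + 1) * (d.factorial : ℂ) := by
      rw [Nat.factorial_succ]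
      push_cast
      ring
    rw [show k + 1 + (d + 2) = k + 1 + d + 2 by omega, show (d + 2 : ℕ) = d + 2 from rfl,
      hF2, hG2]
    rw [show k + 1 + (d + 1) = k + 1 + d + 1 by omega] at ih1
    rw [hF1, hG1] at ih1
    push_cast at hrecL hrecR ih0 ih1 ⊢
    linear_combination ((((k : ℂ) + 1 + d) + 1) * ((k + 1 + d).factorial : ℂ)) * hrecL
      - (genBinom x (k + 1) * ((k + 1).factorial : ℂ) * (B - 1) ^ (k + 1)
          * ((d : ℂ) + 1) * (d.factorial : ℂ)) * hrecR
      + (B * x + ((k : ℂ) - x) - (B + 1) * (((k : ℂ) + 1 + d) + 1)) * ih1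
      - (B * ((d : ℂ) + 1) * ((k : ℂ) + (d : ℂ) + 2)) * ih0

end MeixnerAux

set_option maxHeartbeats 2000000 in
/-- For `c ∈ {0,-1,-2,…}` and `n ≥ -c+1`,
`m_n^{a,c}(x) = [∏_{j=0}^{-c}(x-j)/∏_{j=0}^{-c}(n-j)]·m_{n+c-1}^{a,2-c}(x+c-1)`. -/
theorem meixner_factorization (a : ℝ) (ha0 : a ≠ 0) (ha1 : a ≠ 1)
    (c : ℤ) (hc : c ≤ 0) (n : ℕ) (hn : -c + 1 ≤ (n : ℤ)) (x : ℂ) :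
    meixner a (c : ℝ) n x =
      ((∏ j ∈ Finset.range ((-c).toNat + 1), (x - (j : ℂ))) /
        (∏ j ∈ Finset.range ((-c).toNat + 1), ((n : ℂ) - (j : ℂ)))) *
      meixner a ((2 - c : ℤ) : ℝ) ((n : ℤ) + c - 1).toNat (x + (c : ℂ) - 1) := by
  have hA0 : (a : ℂ) ≠ 0 := by exact_mod_cast ha0
  have hA1 : (1 : ℂ) - (a : ℂ) ≠ 0 := by
    intro h
    exact ha1 (by exact_mod_cast (sub_eq_zero.mp h).symm)
  obtain ⟨k, hk⟩ : ∃ k : ℕ, c = -(k : ℤ) := ⟨(-c).toNat, by omega⟩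
  subst hk
  obtain ⟨d, hd⟩ : ∃ d : ℕ, n = k + 1 + d := ⟨n - (k + 1), by omega⟩
  subst hd
  set B : ℂ := ((a : ℂ))⁻¹ with hB
  have hkt : ((-(-(k : ℤ))).toNat) = k := by omega
  have hmt : (((k + 1 + d : ℕ) : ℤ) + (-(k : ℤ)) - 1).toNat = d := by omega
  rw [hkt, hmt]
  have hzpow : ∀ j : ℕ, (a : ℂ) ^ (-(j : ℤ)) = B ^ j := fun j => by
    rw [hB, zpow_neg, zpow_natCast, inv_pow]
  have hL : meixner a ((-(k : ℤ) : ℤ) : ℝ) (k + 1 + d) x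
      = ((a : ℂ) ^ (k + 1 + d) / (1 - (a : ℂ)) ^ (k + 1 + d))
          * MeixnerAux.S B x ((k : ℂ) - x) (k + 1 + d) := by
    rw [meixner, MeixnerAux.S]
    congr 1
    refine Finset.sum_congr rfl fun j _ => ?_
    rw [hzpow j, show -x - (((-(k : ℤ) : ℤ) : ℝ) : ℂ) = (k : ℂ) - x by push_cast; ring]
  have hx' : x + (((-(k : ℤ) : ℤ) : ℂ)) - 1 = x - (k : ℂ) - 1 := by push_cast; ring
  rw [hx']
  have hR : meixner a (((2 - -(k : ℤ) : ℤ)) : ℝ) d (x - (k : ℂ) - 1)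
      = ((a : ℂ) ^ d / (1 - (a : ℂ)) ^ d)
          * MeixnerAux.S B (x - (k : ℂ) - 1) (-x - 1) d := by
    rw [meixner, MeixnerAux.S]
    congr 1
    refine Finset.sum_congr rfl fun j _ => ?_
    rw [hzpow j,
      show -(x - (k : ℂ) - 1) - ((((2 - -(k : ℤ) : ℤ)) : ℝ) : ℂ) = -x - 1 by push_cast; ring]
  rw [hL, hR]
  have hclaim := MeixnerAux.claim B x k d
  have hPx : (∏ j ∈ Finset.range (k + 1), (x - (j : ℂ)))
      = genBinom x (k + 1) * ((k + 1).factorial : ℂ) := by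
    rw [genBinom, div_mul_cancel₀]
    exact MeixnerAux.factorial_cast_ne_zero (k + 1)
  have hPn : (∏ j ∈ Finset.range (k + 1), (((k + 1 + d : ℕ) : ℂ) - (j : ℂ)))
      * ((d.factorial : ℂ)) = (((k + 1 + d).factorial : ℂ)) := by
    have h1 : ∀ j ∈ Finset.range (k + 1),
        (((k + 1 + d : ℕ) : ℂ) - (j : ℂ)) = ((k + 1 + d - j : ℕ) : ℂ) := by
      intro j hj
      have hj' : j ≤ k + 1 + d := by have := Finset.mem_range.mp hj; omega
      rw [Nat.cast_sub hj']
    rw [Finset.prod_congr rfl h1, ← Nat.cast_prod, ← Nat.descFactorial_eq_prod_range,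
      ← Nat.cast_mul]
    norm_cast
    rw [mul_comm]
    have hfd := Nat.factorial_mul_descFactorial (n := k + 1 + d) (k := k + 1) (by omega)
    simpa [show k + 1 + d - (k + 1) = d by omega] using hfd
  have hPn0 : (∏ j ∈ Finset.range (k + 1), (((k + 1 + d : ℕ) : ℂ) - (j : ℂ))) ≠ 0 := by
    intro h
    rw [h, zero_mul] at hPn
    exact MeixnerAux.factorial_cast_ne_zero _ hPn.symm
  rw [hPx]
  have hBpow : (B - 1) ^ (k + 1) * (a : ℂ) ^ (k + 1) = (1 - (a : ℂ)) ^ (k + 1) := by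
    rw [← mul_pow]
    congr 1
    rw [hB]
    field_simp
  have hpowA : (a : ℂ) ^ (k + 1 + d) = (a : ℂ) ^ (k + 1) * (a : ℂ) ^ d := pow_add _ _ _
  have hpow1 : ((1 : ℂ) - (a : ℂ)) ^ (k + 1 + d)
      = (1 - (a : ℂ)) ^ (k + 1) * (1 - (a : ℂ)) ^ d := pow_add _ _ _
  have hd0 : ((d.factorial : ℂ)) ≠ 0 := MeixnerAux.factorial_cast_ne_zero d
  have hkd0 : (((k + 1 + d).factorial : ℂ)) ≠ 0 := MeixnerAux.factorial_cast_ne_zero (k + 1 + d)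
  have hclaim2 : MeixnerAux.S B x ((k : ℂ) - x) (k + 1 + d) * (((k + 1 + d).factorial : ℂ))
      * (a : ℂ) ^ (k + 1)
      = genBinom x (k + 1) * ((k + 1).factorial : ℂ) * (1 - (a : ℂ)) ^ (k + 1)
          * (d.factorial : ℂ) * MeixnerAux.S B (x - (k : ℂ) - 1) (-x - 1) d := by
    linear_combination ((a : ℂ) ^ (k + 1)) * hclaim
      + (genBinom x (k + 1) * ((k + 1).factorial : ℂ) * (d.factorial : ℂ)
          * MeixnerAux.S B (x - (k : ℂ) - 1) (-x - 1) d) * hBpow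
  rw [div_mul_eq_mul_div, div_mul_eq_mul_div,
    div_eq_div_iff (pow_ne_zero _ hA1) hPn0, hpowA, hpow1]
  have hcancel : genBinom x (k + 1) * ((k + 1).factorial : ℂ)
        * ((a : ℂ) ^ d / (1 - (a : ℂ)) ^ d * MeixnerAux.S B (x - (k : ℂ) - 1) (-x - 1) d)
        * ((1 - (a : ℂ)) ^ (k + 1) * (1 - (a : ℂ)) ^ d)
      = genBinom x (k + 1) * ((k + 1).factorial : ℂ)
        * ((a : ℂ) ^ d * MeixnerAux.S B (x - (k : ℂ) - 1) (-x - 1) d)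
        * (1 - (a : ℂ)) ^ (k + 1) := by
    field_simp
  rw [hcancel]
  refine mul_left_cancel₀ hd0 ?_
  linear_combination ((a : ℂ) ^ d) * hclaim2
    + ((a : ℂ) ^ (k + 1) * (a : ℂ) ^ d
        * MeixnerAux.S B x ((k : ℂ) - x) (k + 1 + d)) * hPn
end
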